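/- arXiv:1810.07863 — 2 statements merged into one kernel-verified Lean document; each statement's English description precedes it below -/
import Mathlib

section
/- (Finite blocklength upper bound.) Let P be a probability distribution on a countable set S, let a > 0 and η ≥ 1 be real numbers, let ε ∈ [0,1), and let A ⊆ S satisfy P(A) ≥ 1 − ε. Then there exist an encoder φ : S → 𝒰* and a decoder ψ : 𝒰* → S such that P{x : ψ(φ(x)) ≠ x} ≤ ε and P{x : l(φ(x)) > η} ≤ P{x ∈ A : a·P({x}) ≤ K^{−η}·P(A)} + a·K. -/
open Filter MeasureTheory

namespace NY

/-- A probability distribution on a set, given by its point mass function. -/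
structure Dist (α : Type*) where
  p : α → ℝ
  nonneg : ∀ x, 0 ≤ p x
  hasSum : HasSum p 1

/-- The probability of a set under a distribution. -/
noncomputable def Dist.pr {α : Type*} (P : Dist α) (A : Set α) : ℝ := ∑' x : A, P.p x.1

/-- 𝒰* : nonempty finite strings over the code alphabet 𝒰 = {1,…,K}. -/
abbrev Word (K : ℕ) := {u : List (Fin K) // u ≠ []}

/-- Length of a string, as a real number. -/
noncomputable def wlen {K : ℕ} (u : Word K) : ℝ := u.1.length

/-- Error probability of a variable-length code (φ, ψ). -/
noncomputable def errP {α : Type*} {K : ℕ} (P : Dist α) (φ : α → Word K) (ψ : Word K → α) : ℝ :=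
  P.pr {x | ψ (φ x) ≠ x}

/-- Overflow probability of an encoder φ with threshold η. -/
noncomputable def ovP {α : Type*} {K : ℕ} (P : Dist α) (φ : α → Word K) (η : ℝ) : ℝ :=
  P.pr {x | wlen (φ x) > η}

/-- A general source: for each blocklength n, a distribution on 𝒳^n. -/
abbrev Source (𝒳 : Type*) := (n : ℕ) → Dist (Fin n → 𝒳)

/-- The limit as ν ↓ 0 of a function g which is nonincreasing in ν
(the limit exists by monotonicity and equals the supremum over ν > 0). -/
noncomputable def limNu (g : ℝ → ℝ) : ℝ := sSup (g '' Set.Ioi (0 : ℝ))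

variable {𝒳 : Type*}

/-- A rate R ≥ 0 is (ε,δ)-achievable. -/
def FirstAch (K : ℕ) (X : Source 𝒳) (ε δ R : ℝ) : Prop :=
  0 ≤ R ∧ ∃ (φ : ∀ n, (Fin n → 𝒳) → Word K) (ψ : ∀ n, Word K → (Fin n → 𝒳)),
    limsup (fun n => errP (X n) (φ n) (ψ n)) atTop ≤ ε ∧
    limsup (fun n => ovP (X n) (φ n) ((n : ℝ) * R)) atTop ≤ δ

/-- The first-order (ε,δ)-optimum threshold R(ε,δ|X). -/
noncomputable def Ropt (K : ℕ) (X : Source 𝒳) (ε δ : ℝ) : ℝ :=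
  sInf {R | FirstAch K X ε δ R}

/-- L is (ε,δ,R)-achievable (second order). -/
def SecondAch (K : ℕ) (X : Source 𝒳) (ε δ R L : ℝ) : Prop :=
  ∃ (φ : ∀ n, (Fin n → 𝒳) → Word K) (ψ : ∀ n, Word K → (Fin n → 𝒳)),
    limsup (fun n => errP (X n) (φ n) (ψ n)) atTop ≤ ε ∧
    limsup (fun n => ovP (X n) (φ n) ((n : ℝ) * R + Real.sqrt (n : ℝ) * L)) atTop ≤ δ

/-- The second-order (ε,δ,R)-optimum threshold L(ε,δ,R|X). -/
noncomputable def Lopt (K : ℕ) (X : Source 𝒳) (ε δ R : ℝ) : ℝ :=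
  sInf {L | SecondAch K X ε δ R L}

/-- A rate R ≥ 0 is optimistically (ε,δ)-achievable. -/
def OptFirstAch (K : ℕ) (X : Source 𝒳) (ε δ R : ℝ) : Prop :=
  0 ≤ R ∧ ∃ (φ : ∀ n, (Fin n → 𝒳) → Word K) (ψ : ∀ n, Word K → (Fin n → 𝒳)),
    ∀ γ > (0 : ℝ), ∃ ns : ℕ → ℕ, StrictMono ns ∧ ∀ i,
      errP (X (ns i)) (φ (ns i)) (ψ (ns i)) ≤ ε + γ ∧
      ovP (X (ns i)) (φ (ns i)) ((ns i : ℝ) * R) ≤ δ + γ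

/-- The optimistic first-order (ε,δ)-optimum threshold R*(ε,δ|X). -/
noncomputable def RoptStar (K : ℕ) (X : Source 𝒳) (ε δ : ℝ) : ℝ :=
  sInf {R | OptFirstAch K X ε δ R}

/-- L is optimistically (ε,δ,R)-achievable. -/
def OptSecondAch (K : ℕ) (X : Source 𝒳) (ε δ R L : ℝ) : Prop :=
  ∃ (φ : ∀ n, (Fin n → 𝒳) → Word K) (ψ : ∀ n, Word K → (Fin n → 𝒳)),
    ∀ γ > (0 : ℝ), ∃ ns : ℕ → ℕ, StrictMono ns ∧ ∀ i,
      errP (X (ns i)) (φ (ns i)) (ψ (ns i)) ≤ ε + γ ∧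
      ovP (X (ns i)) (φ (ns i)) ((ns i : ℝ) * R + Real.sqrt (ns i : ℝ) * L) ≤ δ + γ

/-- The optimistic second-order (ε,δ,R)-optimum threshold L*(ε,δ,R|X). -/
noncomputable def LoptStar (K : ℕ) (X : Source 𝒳) (ε δ R : ℝ) : ℝ :=
  sInf {L | OptSecondAch K X ε δ R L}

/-- A rate R ≥ 0 is type I (ε,δ)-achievable. -/
def TypeIAch (K : ℕ) (X : Source 𝒳) (ε δ R : ℝ) : Prop :=
  0 ≤ R ∧ ∃ (φ : ∀ n, (Fin n → 𝒳) → Word K) (ψ : ∀ n, Word K → (Fin n → 𝒳)),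
    limsup (fun n => errP (X n) (φ n) (ψ n)) atTop ≤ ε ∧
    liminf (fun n => ovP (X n) (φ n) ((n : ℝ) * R)) atTop ≤ δ

/-- R†(ε,δ|X). -/
noncomputable def Rdagger (K : ℕ) (X : Source 𝒳) (ε δ : ℝ) : ℝ :=
  sInf {R | TypeIAch K X ε δ R}

/-- A rate R ≥ 0 is type II (ε,δ)-achievable. -/
def TypeIIAch (K : ℕ) (X : Source 𝒳) (ε δ R : ℝ) : Prop :=
  0 ≤ R ∧ ∃ (φ : ∀ n, (Fin n → 𝒳) → Word K) (ψ : ∀ n, Word K → (Fin n → 𝒳)),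
    liminf (fun n => errP (X n) (φ n) (ψ n)) atTop ≤ ε ∧
    limsup (fun n => ovP (X n) (φ n) ((n : ℝ) * R)) atTop ≤ δ

/-- R‡(ε,δ|X). -/
noncomputable def Rddagger (K : ℕ) (X : Source 𝒳) (ε δ : ℝ) : ℝ :=
  sInf {R | TypeIIAch K X ε δ R}

/-- H̄_γ(X) := inf{ R : limsup_n Pr{ (1/n) log(1/P_{X^n}(X^n)) > R } ≤ γ }. -/
noncomputable def Hbar (K : ℕ) (X : Source 𝒳) (γ : ℝ) : ℝ :=
  sInf {R | limsup (fun n =>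
    (X n).pr {x | Real.logb (K : ℝ) (1 / (X n).p x) / (n : ℝ) > R}) atTop ≤ γ}

/-- H̄*_γ(X) (optimistic version, with liminf). -/
noncomputable def HbarStar (K : ℕ) (X : Source 𝒳) (γ : ℝ) : ℝ :=
  sInf {R | liminf (fun n =>
    (X n).pr {x | Real.logb (K : ℝ) (1 / (X n).p x) / (n : ℝ) > R}) atTop ≤ γ}

/-- H̄_γ(R|X) := inf{ L : limsup_n Pr{ (1/n) log(1/P_{X^n}(X^n)) > R + L/√n } ≤ γ }. -/
noncomputable def Hbar2 (K : ℕ) (X : Source 𝒳) (γ R : ℝ) : ℝ :=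
  sInf {L | limsup (fun n =>
    (X n).pr {x | Real.logb (K : ℝ) (1 / (X n).p x) / (n : ℝ)
      > R + L / Real.sqrt (n : ℝ)}) atTop ≤ γ}

/-- H̄*_γ(R|X) (optimistic version, with liminf). -/
noncomputable def Hbar2Star (K : ℕ) (X : Source 𝒳) (γ R : ℝ) : ℝ :=
  sInf {L | liminf (fun n =>
    (X n).pr {x | Real.logb (K : ℝ) (1 / (X n).p x) / (n : ℝ)
      > R + L / Real.sqrt (n : ℝ)}) atTop ≤ γ}

/-- F(ε,R) := limsup_n inf_{A : Pr(A) ≥ 1−ε} Pr{ −(1/n) log P_{X^n}(X^n) ≥ R, X^n ∈ A }. -/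
noncomputable def Fspec (K : ℕ) (X : Source 𝒳) (ε R : ℝ) : ℝ :=
  limsup (fun n =>
    sInf ((fun A : Set (Fin n → 𝒳) =>
        (X n).pr (A ∩ {x | -Real.logb (K : ℝ) ((X n).p x) / (n : ℝ) ≥ R})) ''
      {A | (X n).pr A ≥ 1 - ε})) atTop

/-- H̃_{ε,δ}(X) := inf{ R : F(ε,R) ≤ δ }. -/
noncomputable def Htilde (K : ℕ) (X : Source 𝒳) (ε δ : ℝ) : ℝ :=
  sInf {R | Fspec K X ε R ≤ δ}

/-- G_{ε,δ}(X). -/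
noncomputable def Gfirst (K : ℕ) (X : Source 𝒳) (ε δ : ℝ) : ℝ :=
  sInf {R | limNu (fun ν => limsup (fun n =>
    sInf ((fun A : Set (Fin n → 𝒳) =>
        (X n).pr (A ∩ {x | -Real.logb (K : ℝ) ((X n).p x / (X n).pr A) / (n : ℝ) ≥ R})) ''
      {A | (X n).pr A ≥ 1 - ε - ν})) atTop) ≤ δ}

/-- G*_{ε,δ}(X) (optimistic version, with liminf). -/
noncomputable def GfirstStar (K : ℕ) (X : Source 𝒳) (ε δ : ℝ) : ℝ :=
  sInf {R | limNu (fun ν => liminf (fun n =>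
    sInf ((fun A : Set (Fin n → 𝒳) =>
        (X n).pr (A ∩ {x | -Real.logb (K : ℝ) ((X n).p x / (X n).pr A) / (n : ℝ) ≥ R})) ''
      {A | (X n).pr A ≥ 1 - ε - ν})) atTop) ≤ δ}

/-- G_{ε,δ}(R|X). -/
noncomputable def Gsecond (K : ℕ) (X : Source 𝒳) (ε δ R : ℝ) : ℝ :=
  sInf {L | limNu (fun ν => limsup (fun n =>
    sInf ((fun A : Set (Fin n → 𝒳) =>
        (X n).pr (A ∩ {x | -Real.logb (K : ℝ) ((X n).p x / (X n).pr A) / (n : ℝ)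
          ≥ R + L / Real.sqrt (n : ℝ)})) ''
      {A | (X n).pr A ≥ 1 - ε - ν})) atTop) ≤ δ}

/-- G*_{ε,δ}(R|X) (optimistic version, with liminf). -/
noncomputable def GsecondStar (K : ℕ) (X : Source 𝒳) (ε δ R : ℝ) : ℝ :=
  sInf {L | limNu (fun ν => liminf (fun n =>
    sInf ((fun A : Set (Fin n → 𝒳) =>
        (X n).pr (A ∩ {x | -Real.logb (K : ℝ) ((X n).p x / (X n).pr A) / (n : ℝ)
          ≥ R + L / Real.sqrt (n : ℝ)})) ''
      {A | (X n).pr A ≥ 1 - ε - ν})) atTop) ≤ δ}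

/-- A rate R is optimistically ε-achievable by fixed-length codes. -/
def FixAchR (K : ℕ) (X : Source 𝒳) (ε R : ℝ) : Prop :=
  ∃ (M : ℕ → ℕ) (φ : ∀ n, (Fin n → 𝒳) → Fin (M n)) (ψ : ∀ n, Fin (M n) → (Fin n → 𝒳)),
    ∀ γ > (0 : ℝ), ∃ ns : ℕ → ℕ, StrictMono ns ∧ ∀ i,
      (X (ns i)).pr {x | ψ (ns i) (φ (ns i) x) ≠ x} ≤ ε + γ ∧
      Real.logb (K : ℝ) (M (ns i) : ℝ) / (ns i : ℝ) ≤ R + γ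

/-- R^f(ε|X). -/
noncomputable def Rfix (K : ℕ) (X : Source 𝒳) (ε : ℝ) : ℝ :=
  sInf {R | FixAchR K X ε R}

/-- A real L is optimistically (ε,R)-achievable by fixed-length codes. -/
def FixAchL (K : ℕ) (X : Source 𝒳) (ε R L : ℝ) : Prop :=
  ∃ (M : ℕ → ℕ) (φ : ∀ n, (Fin n → 𝒳) → Fin (M n)) (ψ : ∀ n, Fin (M n) → (Fin n → 𝒳)),
    ∀ γ > (0 : ℝ), ∃ ns : ℕ → ℕ, StrictMono ns ∧ ∀ i,
      (X (ns i)).pr {x | ψ (ns i) (φ (ns i) x) ≠ x} ≤ ε + γ ∧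
      Real.logb (K : ℝ) ((M (ns i) : ℝ) / (K : ℝ) ^ ((ns i : ℝ) * R)) / Real.sqrt (ns i : ℝ)
        ≤ L + γ

/-- L^f(ε,R|X). -/
noncomputable def Lfix (K : ℕ) (X : Source 𝒳) (ε R : ℝ) : ℝ :=
  sInf {L | FixAchL K X ε R L}

section AuxPr

variable {α : Type*} (P : Dist α)

lemma Dist.summable' : Summable P.p := P.hasSum.summable

lemma Dist.pr_eq_tsum_indicator (A : Set α) : P.pr A = ∑' x, A.indicator P.p x :=
  tsum_subtype A P.p

lemma Dist.pr_nonneg' (A : Set α) : 0 ≤ P.pr A :=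
  tsum_nonneg fun x => P.nonneg _

lemma Dist.pr_mono' {A B : Set α} (h : A ⊆ B) : P.pr A ≤ P.pr B := by
  rw [P.pr_eq_tsum_indicator, P.pr_eq_tsum_indicator]
  exact Summable.tsum_le_tsum
    (fun x => Set.indicator_le_indicator_of_subset h (fun y => P.nonneg y) x)
    (P.summable'.indicator A) (P.summable'.indicator B)

lemma Dist.pr_union_le' (A B : Set α) : P.pr (A ∪ B) ≤ P.pr A + P.pr B := by
  rw [P.pr_eq_tsum_indicator, P.pr_eq_tsum_indicator, P.pr_eq_tsum_indicator,
    ← Summable.tsum_add (P.summable'.indicator A) (P.summable'.indicator B)]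
  refine Summable.tsum_le_tsum (fun x => ?_) (P.summable'.indicator _)
    ((P.summable'.indicator A).add (P.summable'.indicator B))
  by_cases hA : x ∈ A <;> by_cases hB : x ∈ B <;>
    simp [Set.indicator_of_mem, Set.indicator_of_notMem, Set.mem_union, hA, hB,
      P.nonneg x] <;> positivity

lemma Dist.pr_add_pr_compl (A : Set α) : P.pr A + P.pr Aᶜ = 1 := by
  rw [Dist.pr, Dist.pr, Summable.tsum_subtype_add_tsum_subtype_compl P.summable' A,
    P.hasSum.tsum_eq]

lemma Dist.pr_le_one' (A : Set α) : P.pr A ≤ 1 := by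
  have := P.pr_add_pr_compl A
  have := P.pr_nonneg' Aᶜ
  linarith

lemma Dist.pr_finset (F : Finset α) : P.pr ↑F = ∑ x ∈ F, P.p x :=
  F.tsum_subtype' P.p

end AuxPr

/-- finite blocklength upper bound. -/
theorem statement1 {S : Type*} [Countable S] (K : ℕ) (hK : 2 ≤ K)
    (P : Dist S) (a η ε : ℝ) (ha : 0 < a) (hη : 1 ≤ η) (hε0 : 0 ≤ ε) (hε1 : ε < 1)
    (A : Set S) (hA : P.pr A ≥ 1 - ε) :
    ∃ (φ : S → Word K) (ψ : Word K → S),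
      P.pr {x | ψ (φ x) ≠ x} ≤ ε ∧
      P.pr {x | wlen (φ x) > η} ≤
        P.pr (A ∩ {x | a * P.p x ≤ (K : ℝ) ^ (-η) * P.pr A}) + a * K := by
  classical
  haveI : NeZero K := ⟨by omega⟩
  -- S is nonempty
  haveI hSne : Nonempty S := by
    by_contra h
    rw [not_nonempty_iff] at h
    exact one_ne_zero (P.hasSum.unique hasSum_empty)
  obtain ⟨ι, hι⟩ := Countable.exists_injective_nat S
  -- basic numbers
  set m : ℕ := ⌊η⌋₊ with hm
  have hm1 : 1 ≤ m := Nat.le_floor (by exact_mod_cast hη)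
  have hmη : (m : ℝ) ≤ η := Nat.floor_le (by linarith)
  have hηm : η < (m : ℝ) + 1 := Nat.lt_floor_add_one η
  have hK1 : (1 : ℝ) ≤ (K : ℝ) := by exact_mod_cast Nat.one_le_of_lt hK
  have hK0 : (0 : ℝ) < (K : ℝ) := by linarith
  have hA0 : 0 < P.pr A := lt_of_lt_of_le (by linarith) hA
  set c : ℝ := (K : ℝ) ^ (-η) * P.pr A with hc
  have hc0 : 0 < c := mul_pos (Real.rpow_pos_of_pos hK0 _) hA0
  have hKm0 : (0 : ℝ) < (K : ℝ) ^ m := pow_pos hK0 m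
  -- the finite set C
  set Cset : Set S := A ∩ {x | c < a * P.p x} with hCset
  have hCfin : Cset.Finite := by
    have ht : (0 : ℝ) < c / a := div_pos hc0 ha
    have hev : ∀ᶠ x in Filter.cofinite, P.p x < c / a :=
      P.summable'.tendsto_cofinite_zero.eventually_lt_const ht
    refine Set.Finite.subset (Filter.eventually_cofinite.mp hev) ?_
    intro x hx
    have : c < a * P.p x := hx.2
    have : c / a < P.p x := by
      rw [div_lt_iff₀ ha] at *
      linarith [mul_comm a (P.p x)]
    simp only [Set.mem_setOf_eq, not_lt]
    linarith
  set Cfin : Finset S := hCfin.toFinset with hCfinDef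
  have hCsub : (Cfin : Set S) = Cset := hCfin.coe_toFinset
  -- lower bound on p on C
  have hpC : ∀ x ∈ Cfin, c / a ≤ P.p x := by
    intro x hx
    rw [hCfinDef, Set.Finite.mem_toFinset] at hx
    have : c < a * P.p x := hx.2
    rw [div_le_iff₀ ha]
    calc c ≤ a * P.p x := le_of_lt this
    _ = P.p x * a := mul_comm _ _
  -- C ⊆ A
  have hCA : (Cfin : Set S) ⊆ A := by rw [hCsub]; exact Set.inter_subset_left
  -- |C| ≤ a K^η
  have hCcard : (Cfin.card : ℝ) ≤ a * (K : ℝ) ^ η := by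
    have h1 : Cfin.card • (c / a) ≤ ∑ x ∈ Cfin, P.p x :=
      Finset.card_nsmul_le_sum Cfin P.p (c / a) hpC
    have h2 : ∑ x ∈ Cfin, P.p x ≤ P.pr A := by
      rw [← P.pr_finset]; exact P.pr_mono' hCA
    rw [nsmul_eq_mul] at h1
    have h3 : (Cfin.card : ℝ) * (c / a) ≤ P.pr A := le_trans h1 h2
    have hKη : (0 : ℝ) < (K : ℝ) ^ (-η) := Real.rpow_pos_of_pos hK0 _
    have h4 : (Cfin.card : ℝ) * ((K : ℝ) ^ (-η) / a) ≤ 1 := by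
      have : (Cfin.card : ℝ) * (c / a) = (Cfin.card : ℝ) * ((K : ℝ) ^ (-η) / a) * P.pr A := by
        rw [hc]; ring
      rw [this] at h3
      exact le_of_mul_le_mul_right (by linarith [h3]) hA0
    have h5 : (Cfin.card : ℝ) * (K : ℝ) ^ (-η) ≤ a := by
      rw [mul_div_assoc'] at h4
      calc (Cfin.card : ℝ) * (K : ℝ) ^ (-η) = ((Cfin.card : ℝ) * (K : ℝ) ^ (-η) / a) * a := by
            field_simp
      _ ≤ 1 * a := by apply mul_le_mul_of_nonneg_right h4 (le_of_lt ha)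
      _ = a := one_mul a
    have h6 : (Cfin.card : ℝ) = (Cfin.card : ℝ) * (K : ℝ) ^ (-η) * (K : ℝ) ^ η := by
      rw [mul_assoc, ← Real.rpow_add hK0]
      simp
    rw [h6]
    exact mul_le_mul_of_nonneg_right h5 (le_of_lt (Real.rpow_pos_of_pos hK0 _))
  -- the set D of high-probability elements of C
  set D : Finset S := Cfin.filter (fun x => ((K : ℝ) ^ m)⁻¹ < P.p x) with hD
  have hDcard : D.card ≤ K ^ m := by
    have h1 : D.card • ((K : ℝ) ^ m)⁻¹ ≤ ∑ x ∈ D, P.p x :=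
      Finset.card_nsmul_le_sum D P.p _ (fun x hx => le_of_lt (Finset.mem_filter.mp hx).2)
    have h2 : ∑ x ∈ D, P.p x ≤ 1 := by
      rw [← P.pr_finset]; exact P.pr_le_one' _
    rw [nsmul_eq_mul] at h1
    have h3 : (D.card : ℝ) * ((K : ℝ) ^ m)⁻¹ ≤ 1 := le_trans h1 h2
    have h4 : (D.card : ℝ) ≤ (K : ℝ) ^ m := by
      rw [mul_inv_le_iff₀ hKm0] at h3
      linarith
    exact_mod_cast (by push_cast; exact h4 : (D.card : ℝ) ≤ ((K ^ m : ℕ) : ℝ))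
  -- the short encoder on D
  let sc : {x // x ∈ D} → Word K := fun x =>
    ⟨List.ofFn (finFunctionFinEquiv.symm (Fin.castLE hDcard (D.equivFin x))),
      by
        intro hnil
        have := congrArg List.length hnil
        simp only [List.length_ofFn, List.length_nil] at this
        omega⟩
  have hsclen : ∀ x, (sc x).1.length = m := by
    intro x; simp [sc]
  have hscinj : Function.Injective sc := by
    intro x y hxy
    have h1 : (sc x).1 = (sc y).1 := congrArg Subtype.val hxy
    have h2 := List.ofFn_injective h1
    have h3 := finFunctionFinEquiv.symm.injective h2
    have h4 := Fin.castLE_injective hDcard h3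
    exact D.equivFin.injective h4
  -- the long encoder
  let lc : S → Word K := fun x =>
    ⟨List.replicate (m + 1 + ι x) 0, by
      intro hnil
      have := congrArg List.length hnil
      simp only [List.length_replicate, List.length_nil] at this
      omega⟩
  have hlclen : ∀ x, (lc x).1.length = m + 1 + ι x := by
    intro x; simp [lc]
  have hlcinj : Function.Injective lc := by
    intro x y hxy
    have h1 : (lc x).1 = (lc y).1 := congrArg Subtype.val hxy
    have h2 := congrArg List.length h1
    simp only [hlclen] at h2
    exact hι (by omega)
  -- the dummy word
  have hm0 : m ≠ 0 := by omega
  let w0 : Word K := ⟨List.replicate m 0, by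
    intro hnil
    have := congrArg List.length hnil
    simp only [List.length_replicate, List.length_nil] at this
    omega⟩
  -- the encoder
  let φ : S → Word K := fun x =>
    if hx : x ∈ D then sc ⟨x, hx⟩ else if x ∈ A then lc x else w0
  -- injectivity on A
  have hInj : Set.InjOn φ A := by
    intro x hx y hy hxy
    by_cases hxD : x ∈ D <;> by_cases hyD : y ∈ D
    · simp only [φ, dif_pos hxD, dif_pos hyD] at hxy
      exact congrArg Subtype.val (hscinj hxy)
    · simp only [φ, dif_pos hxD, dif_neg hyD, if_pos hy] at hxy
      have := congrArg (fun w : Word K => w.1.length) hxy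
      simp only [hsclen, hlclen] at this
      omega
    · simp only [φ, dif_neg hxD, dif_pos hyD, if_pos hx] at hxy
      have := congrArg (fun w : Word K => w.1.length) hxy
      simp only [hsclen, hlclen] at this
      omega
    · simp only [φ, dif_neg hxD, dif_neg hyD, if_pos hx, if_pos hy] at hxy
      exact hlcinj hxy
  -- the decoder
  let ψ : Word K → S := fun w =>
    if h : ∃ x ∈ A, φ x = w then h.choose else Classical.arbitrary S
  have hdec : ∀ x ∈ A, ψ (φ x) = x := by
    intro x hx
    have hex : ∃ y ∈ A, φ y = φ x := ⟨x, hx, rfl⟩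
    simp only [ψ, dif_pos hex]
    exact hInj hex.choose_spec.1 hx hex.choose_spec.2
  refine ⟨φ, ψ, ?_, ?_⟩
  · -- error probability
    have hsub : {x | ψ (φ x) ≠ x} ⊆ Aᶜ := by
      intro x hx
      simp only [Set.mem_setOf_eq] at hx
      intro hxA
      exact hx (hdec x hxA)
    calc P.pr {x | ψ (φ x) ≠ x} ≤ P.pr Aᶜ := P.pr_mono' hsub
    _ = 1 - P.pr A := by have := P.pr_add_pr_compl A; linarith
    _ ≤ ε := by linarith
  · -- overflow probability
    have hsub : {x | wlen (φ x) > η} ⊆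
        (A ∩ {x | a * P.p x ≤ (K : ℝ) ^ (-η) * P.pr A}) ∪ ↑(Cfin \ D) := by
      intro x hx
      simp only [Set.mem_setOf_eq, gt_iff_lt] at hx
      by_cases hxD : x ∈ D
      · exfalso
        have : wlen (φ x) = m := by
          simp only [φ, wlen, dif_pos hxD, hsclen]
        rw [this] at hx; linarith
      by_cases hxA : x ∈ A
      · by_cases hxc : a * P.p x ≤ c
        · exact Or.inl ⟨hxA, hxc⟩
        · refine Or.inr ?_
          simp only [Finset.coe_sdiff, Set.mem_diff, Finset.mem_coe]
          refine ⟨?_, hxD⟩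
          rw [hCfinDef, Set.Finite.mem_toFinset]
          exact ⟨hxA, lt_of_not_ge hxc⟩
      · exfalso
        have : wlen (φ x) = m := by
          simp only [φ, wlen, dif_neg hxD, if_neg hxA, w0, List.length_replicate]
        rw [this] at hx; linarith
    calc P.pr {x | wlen (φ x) > η}
        ≤ P.pr ((A ∩ {x | a * P.p x ≤ (K : ℝ) ^ (-η) * P.pr A}) ∪ ↑(Cfin \ D)) :=
          P.pr_mono' hsub
    _ ≤ P.pr (A ∩ {x | a * P.p x ≤ (K : ℝ) ^ (-η) * P.pr A}) + P.pr ↑(Cfin \ D) :=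
          P.pr_union_le' _ _
    _ ≤ P.pr (A ∩ {x | a * P.p x ≤ (K : ℝ) ^ (-η) * P.pr A}) + a * K := by
          have hleft : P.pr ↑(Cfin \ D) ≤ a * K := by
            rw [P.pr_finset]
            have h1 : ∑ x ∈ Cfin \ D, P.p x ≤ (Cfin \ D).card • ((K : ℝ) ^ m)⁻¹ := by
              apply Finset.sum_le_card_nsmul
              intro x hx
              rw [Finset.mem_sdiff] at hx
              by_contra hlt
              exact hx.2 (Finset.mem_filter.mpr ⟨hx.1, lt_of_not_ge hlt⟩)
            rw [nsmul_eq_mul] at h1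
            have h2 : ((Cfin \ D).card : ℝ) ≤ (Cfin.card : ℝ) := by
              exact_mod_cast Finset.card_le_card (Finset.sdiff_subset)
            have h3 : ∑ x ∈ Cfin \ D, P.p x ≤ (a * (K : ℝ) ^ η) * ((K : ℝ) ^ m)⁻¹ := by
              calc ∑ x ∈ Cfin \ D, P.p x ≤ ((Cfin \ D).card : ℝ) * ((K : ℝ) ^ m)⁻¹ := h1
              _ ≤ (a * (K : ℝ) ^ η) * ((K : ℝ) ^ m)⁻¹ := by
                  apply mul_le_mul_of_nonneg_right _ (by positivity)
                  exact le_trans h2 hCcard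
            refine le_trans h3 ?_
            have hKη : (K : ℝ) ^ η ≤ (K : ℝ) ^ m * (K : ℝ) := by
              have := Real.rpow_le_rpow_of_exponent_le hK1 (le_of_lt hηm)
              calc (K : ℝ) ^ η ≤ (K : ℝ) ^ ((m : ℝ) + 1) := this
              _ = (K : ℝ) ^ (m : ℝ) * (K : ℝ) ^ (1 : ℝ) := by
                  rw [← Real.rpow_add hK0]
              _ = (K : ℝ) ^ m * (K : ℝ) := by
                  rw [Real.rpow_natCast, Real.rpow_one]
            calc a * (K : ℝ) ^ η * ((K : ℝ) ^ m)⁻¹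
                ≤ a * ((K : ℝ) ^ m * (K : ℝ)) * ((K : ℝ) ^ m)⁻¹ := by
                  apply mul_le_mul_of_nonneg_right _ (by positivity)
                  exact mul_le_mul_of_nonneg_left hKη (le_of_lt ha)
            _ = a * (K : ℝ) := by field_simp
          linarith
end NY
end

section
/- For any general source X and any ε, δ ∈ [0,1) satisfying ε + δ < 1, it holds that G_{ε,δ}(X) ≥ H̄_{ε+δ}(X). -/
open Filter MeasureTheory

namespace NY

variable {𝒳 : Type*}

/- ===== Auxiliary lemmas for statement7 ===== -/

section AuxStatement7

variable {α : Type*}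

namespace Dist

lemma summable'_s7 (P : Dist α) : Summable P.p := P.hasSum.summable

lemma pr_eq (P : Dist α) (A : Set α) : P.pr A = ∑' x, A.indicator P.p x :=
  tsum_subtype A P.p

lemma summable_ind (P : Dist α) (A : Set α) : Summable (A.indicator P.p) :=
  P.summable'_s7.indicator A

lemma pr_nonneg (P : Dist α) (A : Set α) : 0 ≤ P.pr A := by
  rw [pr_eq]
  exact tsum_nonneg fun x => Set.indicator_nonneg (fun y _ => P.nonneg y) x

lemma pr_mono (P : Dist α) {A B : Set α} (h : A ⊆ B) : P.pr A ≤ P.pr B := by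
  rw [pr_eq, pr_eq]
  refine Summable.tsum_le_tsum ?_ (P.summable_ind A) (P.summable_ind B)
  exact fun x => Set.indicator_le_indicator_of_subset h (fun y => P.nonneg y) x

lemma pr_univ (P : Dist α) : P.pr Set.univ = 1 := by
  rw [pr_eq, Set.indicator_univ]
  exact P.hasSum.tsum_eq

lemma pr_le_one (P : Dist α) (A : Set α) : P.pr A ≤ 1 :=
  (P.pr_mono (Set.subset_univ A)).trans_eq P.pr_univ

lemma pr_singleton (P : Dist α) (x : α) : P.pr {x} = P.p x := by
  rw [pr_eq, tsum_eq_single x]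
  · simp
  · intro b hb
    simp [Set.indicator_apply, hb]

lemma p_le_pr (P : Dist α) {A : Set α} {x : α} (hx : x ∈ A) : P.p x ≤ P.pr A := by
  rw [← P.pr_singleton x]
  exact P.pr_mono (Set.singleton_subset_iff.2 hx)

lemma p_le_one (P : Dist α) (x : α) : P.p x ≤ 1 :=
  (P.p_le_pr (Set.mem_univ x)).trans P.pr_univ.le

lemma pr_union_disjoint (P : Dist α) {A B : Set α} (h : Disjoint A B) :
    P.pr (A ∪ B) = P.pr A + P.pr B := by
  rw [pr_eq, pr_eq, pr_eq, Set.indicator_union_of_disjoint h]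
  exact Summable.tsum_add (P.summable_ind A) (P.summable_ind B)

lemma pr_compl (P : Dist α) (A : Set α) : P.pr Aᶜ = 1 - P.pr A := by
  have h := P.pr_union_disjoint (disjoint_compl_right : Disjoint A Aᶜ)
  rw [Set.union_compl_self, P.pr_univ] at h
  linarith

lemma pr_union_le (P : Dist α) (A B : Set α) : P.pr (A ∪ B) ≤ P.pr A + P.pr B := by
  have h1 : A ∪ B = A ∪ (B \ A) := Set.union_diff_self.symm
  rw [h1, P.pr_union_disjoint disjoint_sdiff_self_right]
  have := P.pr_mono (Set.diff_subset (s := B) (t := A))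
  linarith

lemma pr_empty (P : Dist α) : P.pr (∅ : Set α) = 0 := by
  rw [pr_eq]
  simp

lemma pr_finset_s7 (P : Dist α) (G : Finset α) : P.pr ↑G = ∑ x ∈ G, P.p x :=
  G.tsum_subtype P.p

end Dist

private lemma greedy_aux {β : Type*} [DecidableEq β] (f : β → ℝ) (a : ℝ) (ha : 0 ≤ a) :
    ∀ F : Finset β, (∀ x ∈ F, 0 ≤ f x) → (∀ x ∈ F, f x ≤ a) →
      ∀ t : ℝ, 0 ≤ t → t ≤ ∑ x ∈ F, f x →
      ∃ G ⊆ F, t ≤ ∑ x ∈ G, f x ∧ ∑ x ∈ G, f x ≤ t + a := by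
  intro F
  induction F using Finset.strongInduction with
  | _ F ih =>
    intro hf0 hfa t ht0 htF
    by_cases hle : ∑ x ∈ F, f x ≤ t + a
    · exact ⟨F, subset_rfl, htF, hle⟩
    · push_neg at hle
      have hFne : F.Nonempty := by
        rcases F.eq_empty_or_nonempty with h | h
        · exfalso
          subst h
          simp only [Finset.sum_empty] at hle
          linarith
        · exact h
      obtain ⟨x, hx⟩ := hFne
      have hkey : t ≤ ∑ y ∈ F.erase x, f y := by
        rw [Finset.sum_erase_eq_sub hx]
        have := hfa x hx
        linarith
      obtain ⟨G, hG, h1, h2⟩ := ih (F.erase x) (Finset.erase_ssubset hx)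
        (fun y hy => hf0 y (Finset.mem_of_mem_erase hy))
        (fun y hy => hfa y (Finset.mem_of_mem_erase hy)) t ht0 hkey
      exact ⟨G, hG.trans (Finset.erase_subset x F), h1, h2⟩

lemma Dist.exists_subset_pr (P : Dist α) (Bad : Set α) (a t : ℝ)
    (ha : 0 ≤ a) (hatom : ∀ x ∈ Bad, P.p x ≤ a) (ht0 : 0 ≤ t) (ht : t < P.pr Bad) :
    ∃ S : Set α, S ⊆ Bad ∧ t ≤ P.pr S ∧ P.pr S ≤ t + a := by
  classical
  have hsum : HasSum (fun x : Bad => P.p x.1) (P.pr Bad) := by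
    exact (P.summable'_s7.subtype Bad).hasSum
  have hsum' : Filter.Tendsto (fun F : Finset Bad => ∑ x ∈ F, P.p x.1) atTop
      (nhds (P.pr Bad)) := hsum
  have hev : ∀ᶠ F : Finset Bad in atTop, t < ∑ x ∈ F, P.p x.1 :=
    hsum'.eventually (eventually_gt_nhds ht)
  obtain ⟨F, hF⟩ := hev.exists
  obtain ⟨G, hGF, h1, h2⟩ := greedy_aux (fun x : Bad => P.p x.1) a ha F
    (fun x _ => P.nonneg x.1) (fun x _ => hatom x.1 x.2) t ht0 hF.le
  refine ⟨(↑(G.image Subtype.val) : Set α), ?_, ?_, ?_⟩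
  · intro y hy
    simp only [Finset.coe_image, Set.mem_image, Finset.mem_coe] at hy
    obtain ⟨x, _, rfl⟩ := hy
    exact x.2
  · rw [P.pr_finset_s7, Finset.sum_image fun x _ y _ h => Subtype.val_injective h]
    exact h1
  · rw [P.pr_finset_s7, Finset.sum_image fun x _ y _ h => Subtype.val_injective h]
    exact h2

private lemma limsup_le_add_aux {u h : ℕ → ℝ} {c d : ℝ}
    (hu0 : ∀ n, 0 ≤ u n) (hh1 : ∀ n, h n ≤ 1)
    (hle : ∀ᶠ n in atTop, u n ≤ c + h n) (hld : limsup h atTop ≤ d) :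
    limsup u atTop ≤ c + d := by
  refine le_of_forall_pos_le_add fun κ hκ => ?_
  have h1 : ∀ᶠ n in atTop, h n < d + κ :=
    Filter.eventually_lt_of_limsup_lt (lt_of_le_of_lt hld (by linarith))
      (Filter.isBoundedUnder_of ⟨1, hh1⟩)
  have h2 : ∀ᶠ n in atTop, u n ≤ c + d + κ := by
    filter_upwards [hle, h1] with n ha hb
    linarith
  exact Filter.limsup_le_of_le (Filter.isCoboundedUnder_le_of_le atTop hu0) h2

variable {𝒳 : Type*}

/-- The inner infimum appearing in `Gfirst`. -/
noncomputable def innerInf (K : ℕ) (X : Source 𝒳) (ε ν R : ℝ) (n : ℕ) : ℝ :=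
  sInf ((fun A : Set (Fin n → 𝒳) =>
      (X n).pr (A ∩ {x | -Real.logb (K : ℝ) ((X n).p x / (X n).pr A) / (n : ℝ) ≥ R})) ''
    {A | (X n).pr A ≥ 1 - ε - ν})

lemma innerInf_nonneg (K : ℕ) (X : Source 𝒳) (ε ν R : ℝ) (n : ℕ) :
    0 ≤ innerInf K X ε ν R n := by
  refine Real.sInf_nonneg ?_
  rintro _ ⟨A, _, rfl⟩
  exact (X n).pr_nonneg _

lemma innerInf_le (K : ℕ) (X : Source 𝒳) (ε ν R : ℝ) (n : ℕ) {A : Set (Fin n → 𝒳)}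
    (hA : (X n).pr A ≥ 1 - ε - ν) :
    innerInf K X ε ν R n ≤
      (X n).pr (A ∩ {x | -Real.logb (K : ℝ) ((X n).p x / (X n).pr A) / (n : ℝ) ≥ R}) := by
  refine csInf_le ⟨0, ?_⟩ ⟨A, hA, rfl⟩
  rintro _ ⟨A', _, rfl⟩
  exact (X n).pr_nonneg _

lemma innerInf_le_one (K : ℕ) (X : Source 𝒳) {ε ν : ℝ} (R : ℝ) (n : ℕ)
    (hε0 : 0 ≤ ε) (hν : 0 ≤ ν) : innerInf K X ε ν R n ≤ 1 := by
  have hu : (X n).pr Set.univ ≥ 1 - ε - ν := by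
    rw [(X n).pr_univ]
    linarith
  exact (innerInf_le K X ε ν R n hu).trans ((X n).pr_le_one _)

end AuxStatement7

section MainAux

variable {𝒳 : Type*}

lemma HS_nonneg (K : ℕ) (hK : 2 ≤ K) (X : Source 𝒳) {γ R : ℝ} (hγ : γ < 1)
    (hR : limsup (fun n =>
      (X n).pr {x | Real.logb (K : ℝ) (1 / (X n).p x) / (n : ℝ) > R}) atTop ≤ γ) :
    0 ≤ R := by
  have hK1 : (1 : ℝ) < (K : ℝ) := by exact_mod_cast (by omega : (1 : ℕ) < K)
  by_contra hneg
  push_neg at hneg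
  have huniv : ∀ n, {x : Fin n → 𝒳 | Real.logb (K : ℝ) (1 / (X n).p x) / (n : ℝ) > R}
      = Set.univ := by
    intro n
    ext x
    simp only [Set.mem_setOf_eq, Set.mem_univ, iff_true, gt_iff_lt]
    have hval : 0 ≤ Real.logb (K : ℝ) (1 / (X n).p x) / (n : ℝ) := by
      apply div_nonneg _ (Nat.cast_nonneg n)
      rcases ((X n).nonneg x).eq_or_lt with h0 | h0
      · rw [← h0, div_zero, Real.logb_zero]
      · refine Real.logb_nonneg hK1 ?_
        exact one_le_one_div h0 ((X n).p_le_one x)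
    linarith
  have hc : (fun n => (X n).pr {x | Real.logb (K : ℝ) (1 / (X n).p x) / (n : ℝ) > R})
      = fun _ => (1 : ℝ) := by
    funext n
    rw [huniv n, (X n).pr_univ]
  rw [hc, Filter.limsup_const] at hR
  linarith

lemma HS_of_GS (K : ℕ) (hK : 2 ≤ K) (X : Source 𝒳)
    {ε δ R η : ℝ} (hε0 : 0 ≤ ε) (hε1 : ε < 1) (hδ0 : 0 ≤ δ) (hη : 0 < η)
    (hR : limNu (fun ν => limsup (fun n => innerInf K X ε ν R n) atTop) ≤ δ) :
    limsup (fun n =>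
      (X n).pr {x | Real.logb (K : ℝ) (1 / (X n).p x) / (n : ℝ) > R + η}) atTop ≤ ε + δ := by
  unfold limNu at hR
  have hK1 : (1 : ℝ) < (K : ℝ) := by exact_mod_cast (by omega : (1 : ℕ) < K)
  refine le_of_forall_pos_le_add fun κ hκ => ?_
  set ν := min (κ / 2) ((1 - ε) / 2) with hνdef
  have hν0 : 0 < ν := lt_min (by linarith) (by linarith)
  have hνκ : ν ≤ κ / 2 := min_le_left _ _
  have hνε : 0 < 1 - ε - ν := by
    have : ν ≤ (1 - ε) / 2 := min_le_right _ _
    linarith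
  -- the ν-slice of the limNu is at most δ
  have hgν : limsup (fun n => innerInf K X ε ν R n) atTop ≤ δ := by
    refine le_trans (le_csSup ?_ ?_) hR
    · refine ⟨1, ?_⟩
      rintro _ ⟨ν', hν', rfl⟩
      simp only [Set.mem_Ioi] at hν'
      refine Filter.limsup_le_of_le
        (Filter.isCoboundedUnder_le_of_le atTop fun n => innerInf_nonneg K X ε ν' R n) ?_
      exact Filter.Eventually.of_forall fun n => innerInf_le_one K X R n hε0 hν'.le
    · exact ⟨ν, Set.mem_Ioi.2 hν0, rfl⟩
  -- eventual pointwise bound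
  obtain ⟨N, hN⟩ := exists_nat_ge (-Real.logb (K : ℝ) (1 - ε - ν) / η)
  have hev : ∀ᶠ n in atTop,
      (X n).pr {x | Real.logb (K : ℝ) (1 / (X n).p x) / (n : ℝ) > R + η}
        ≤ (ε + ν) + innerInf K X ε ν R n := by
    filter_upwards [Filter.eventually_ge_atTop (max 1 N)] with n hn
    have hn1 : 1 ≤ n := le_of_max_le_left hn
    have hnN : N ≤ n := le_of_max_le_right hn
    have hnpos : (0 : ℝ) < (n : ℝ) := by exact_mod_cast hn1
    have hlogν : -Real.logb (K : ℝ) (1 - ε - ν) ≤ (n : ℝ) * η := by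
      have h1 : -Real.logb (K : ℝ) (1 - ε - ν) / η ≤ (N : ℝ) := hN
      have h2 : (N : ℝ) ≤ (n : ℝ) := by exact_mod_cast hnN
      have h3 : -Real.logb (K : ℝ) (1 - ε - ν) / η ≤ (n : ℝ) := h1.trans h2
      calc -Real.logb (K : ℝ) (1 - ε - ν)
          = (-Real.logb (K : ℝ) (1 - ε - ν) / η) * η := by field_simp
        _ ≤ (n : ℝ) * η := mul_le_mul_of_nonneg_right h3 hη.le
    have key : ∀ A : Set (Fin n → 𝒳), (X n).pr A ≥ 1 - ε - ν →
        (X n).pr {x | Real.logb (K : ℝ) (1 / (X n).p x) / (n : ℝ) > R + η}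
          ≤ (ε + ν) + (X n).pr
            (A ∩ {x | -Real.logb (K : ℝ) ((X n).p x / (X n).pr A) / (n : ℝ) ≥ R}) := by
      intro A hA
      set P := X n with hP
      have hsub : {x : Fin n → 𝒳 | Real.logb (K : ℝ) (1 / P.p x) / (n : ℝ) > R + η}
          ⊆ Aᶜ ∪ (A ∩ {x | -Real.logb (K : ℝ) (P.p x / P.pr A) / (n : ℝ) ≥ R}) := by
        intro x hx
        simp only [Set.mem_setOf_eq, gt_iff_lt] at hx
        by_cases hxA : x ∈ A
        · refine Or.inr ⟨hxA, ?_⟩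
          simp only [Set.mem_setOf_eq]
          rcases (P.nonneg x).eq_or_lt with hp0 | hp0
          · rw [← hp0, div_zero, Real.logb_zero, zero_div] at hx
            rw [← hp0, zero_div, Real.logb_zero, neg_zero, zero_div]
            linarith
          · have hpA : 0 < P.pr A := lt_of_lt_of_le hp0 (P.p_le_pr hxA)
            have hx' : (R + η) * (n : ℝ) < Real.logb (K : ℝ) (1 / P.p x) := by
              rw [lt_div_iff₀ hnpos] at hx
              exact hx
            rw [one_div, Real.logb_inv] at hx'
            have hprA : Real.logb (K : ℝ) (1 - ε - ν) ≤ Real.logb (K : ℝ) (P.pr A) :=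
              Real.logb_le_logb_of_le hK1 hνε hA
            rw [ge_iff_le, le_div_iff₀ hnpos, Real.logb_div (ne_of_gt hp0) (ne_of_gt hpA)]
            linarith
        · exact Or.inl hxA
      have h1 := P.pr_mono hsub
      have h2 := P.pr_union_le Aᶜ
        (A ∩ {x | -Real.logb (K : ℝ) (P.p x / P.pr A) / (n : ℝ) ≥ R})
      have h3 : P.pr Aᶜ = 1 - P.pr A := P.pr_compl A
      have h4 : 1 - ε - ν ≤ P.pr A := hA
      linarith
    have himg : ((fun A : Set (Fin n → 𝒳) =>
        (X n).pr (A ∩ {x | -Real.logb (K : ℝ) ((X n).p x / (X n).pr A) / (n : ℝ) ≥ R})) ''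
        {A | (X n).pr A ≥ 1 - ε - ν}).Nonempty := by
      refine ⟨_, ⟨Set.univ, ?_, rfl⟩⟩
      simp only [Set.mem_setOf_eq, (X n).pr_univ, ge_iff_le]
      linarith
    have hfin : (X n).pr {x | Real.logb (K : ℝ) (1 / (X n).p x) / (n : ℝ) > R + η} - (ε + ν)
        ≤ innerInf K X ε ν R n := by
      refine le_csInf himg ?_
      rintro _ ⟨A, hA, rfl⟩
      have := key A hA
      linarith
    linarith
  have := limsup_le_add_aux (c := ε + ν) (d := δ)
    (fun n => (X n).pr_nonneg _) (fun n => innerInf_le_one K X R n hε0 hν0.le) hev hgν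
  linarith

lemma GS_of_HS [Countable 𝒳] (K : ℕ) (hK : 2 ≤ K) (X : Source 𝒳)
    {ε δ R : ℝ} (hε0 : 0 ≤ ε) (hδ0 : 0 ≤ δ) (hR0 : 0 ≤ R)
    (hR : limsup (fun n =>
      (X n).pr {x | Real.logb (K : ℝ) (1 / (X n).p x) / (n : ℝ) > R}) atTop ≤ ε + δ) :
    limNu (fun ν => limsup (fun n => innerInf K X ε ν (R + 1) n) atTop) ≤ δ := by
  have hK1 : (1 : ℝ) < (K : ℝ) := by exact_mod_cast (by omega : (1 : ℕ) < K)
  have hK0 : (0 : ℝ) < (K : ℝ) := by linarith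
  unfold limNu
  refine Real.sSup_le ?_ hδ0
  rintro _ ⟨ν, hν, rfl⟩
  simp only [Set.mem_Ioi] at hν
  refine le_of_forall_pos_le_add fun κ hκ => ?_
  set r : ℝ := (K : ℝ) ^ (-(1 : ℝ) / 2 : ℝ) with hrdef
  have hr0 : 0 ≤ r := Real.rpow_nonneg hK0.le _
  have hr1 : r < 1 := Real.rpow_lt_one_of_one_lt_of_neg hK1 (by norm_num)
  have hrn : ∀ n : ℕ, r ^ n = (K : ℝ) ^ (-(n : ℝ) / 2 : ℝ) := by
    intro n
    rw [hrdef, ← Real.rpow_natCast ((K : ℝ) ^ (-(1 : ℝ) / 2 : ℝ)) n, ← Real.rpow_mul hK0.le]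
    ring_nf
  have hrtend : Filter.Tendsto (fun n : ℕ => r ^ n) atTop (nhds 0) :=
    tendsto_pow_atTop_nhds_zero_of_lt_one hr0 hr1
  have hevκ : ∀ᶠ n in atTop, r ^ n < κ := hrtend.eventually (eventually_lt_nhds hκ)
  have hevR : ∀ᶠ n in atTop,
      (X n).pr {x | Real.logb (K : ℝ) (1 / (X n).p x) / (n : ℝ) > R} < ε + δ + ν :=
    Filter.eventually_lt_of_limsup_lt (lt_of_le_of_lt hR (by linarith))
      (Filter.isBoundedUnder_of ⟨1, fun n => (X n).pr_le_one _⟩)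
  refine Filter.limsup_le_of_le (Filter.isCoboundedUnder_le_of_le atTop
    (fun n => innerInf_nonneg K X ε ν (R + 1) n)) ?_
  filter_upwards [hevκ, hevR, Filter.eventually_ge_atTop 1] with n hκn hRn hn1
  set P := X n with hP
  have hnpos : (0 : ℝ) < (n : ℝ) := by exact_mod_cast hn1
  set Bad : Set (Fin n → 𝒳) :=
    {x | Real.logb (K : ℝ) (1 / P.p x) / (n : ℝ) > R + 1 / 2} with hBad
  have hBadsub : Bad ⊆ {x | Real.logb (K : ℝ) (1 / P.p x) / (n : ℝ) > R} := by
    intro x hx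
    simp only [hBad, Set.mem_setOf_eq, gt_iff_lt] at hx ⊢
    linarith
  have hprBad : P.pr Bad < ε + δ + ν := lt_of_le_of_lt (P.pr_mono hBadsub) hRn
  have hprBadc : P.pr Badᶜ = 1 - P.pr Bad := P.pr_compl Bad
  have hprG : 1 - ε - δ - ν < P.pr Badᶜ := by
    rw [hprBadc]
    linarith
  have hatom : ∀ x ∈ Bad, P.p x ≤ r ^ n := by
    intro x hx
    simp only [hBad, Set.mem_setOf_eq, gt_iff_lt] at hx
    have hp0 : 0 < P.p x := by
      rcases (P.nonneg x).eq_or_lt with h0 | h0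
      · exfalso
        rw [← h0, div_zero, Real.logb_zero, zero_div] at hx
        linarith
      · exact h0
    have hx' : (R + 1 / 2) * (n : ℝ) < Real.logb (K : ℝ) (1 / P.p x) := by
      rw [lt_div_iff₀ hnpos] at hx
      exact hx
    have h3 : Real.logb (K : ℝ) (P.p x) < -(n : ℝ) / 2 := by
      rw [one_div (P.p x), Real.logb_inv] at hx'
      nlinarith
    have h4 : P.p x < (K : ℝ) ^ (-(n : ℝ) / 2 : ℝ) := by
      calc P.p x = (K : ℝ) ^ Real.logb (K : ℝ) (P.p x) :=
            (Real.rpow_logb hK0 (by linarith) hp0).symm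
        _ < (K : ℝ) ^ (-(n : ℝ) / 2 : ℝ) := Real.rpow_lt_rpow_of_exponent_lt hK1 h3
    rw [hrn n]
    exact h4.le
  obtain ⟨S, hSBad, hadm, hSle⟩ : ∃ S : Set (Fin n → 𝒳), S ⊆ Bad ∧
      1 - ε - ν ≤ P.pr (Badᶜ ∪ S) ∧ P.pr S ≤ δ + r ^ n := by
    by_cases hcase : 1 - ε - ν ≤ P.pr Badᶜ
    · refine ⟨∅, Set.empty_subset _, ?_, ?_⟩
      · rw [Set.union_empty]
        exact hcase
      · rw [P.pr_empty]
        have := pow_nonneg hr0 n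
        linarith
    · push_neg at hcase
      have ht0 : 0 ≤ 1 - ε - ν - P.pr Badᶜ := by linarith
      have htlt : 1 - ε - ν - P.pr Badᶜ < P.pr Bad := by
        rw [hprBadc]
        linarith
      obtain ⟨S, hS1, hS2, hS3⟩ := P.exists_subset_pr Bad (r ^ n) _
        (pow_nonneg hr0 n) hatom ht0 htlt
      refine ⟨S, hS1, ?_, ?_⟩
      · rw [P.pr_union_disjoint (disjoint_compl_left.mono_right hS1)]
        linarith
      · linarith
  set A : Set (Fin n → 𝒳) := Badᶜ ∪ S with hA
  have hsub2 : A ∩ {x | -Real.logb (K : ℝ) (P.p x / P.pr A) / (n : ℝ) ≥ R + 1} ⊆ S := by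
    rintro x ⟨hxA, hxB⟩
    simp only [Set.mem_setOf_eq] at hxB
    by_contra hxS
    have hxG : x ∈ Badᶜ := by
      rcases hxA with h | h
      · exact h
      · exact absurd h hxS
    have hxG' : Real.logb (K : ℝ) (1 / P.p x) / (n : ℝ) ≤ R + 1 / 2 := by
      have h := hxG
      simp only [hBad, Set.mem_compl_iff, Set.mem_setOf_eq, not_lt, gt_iff_lt] at h
      exact h
    rcases (P.nonneg x).eq_or_lt with h0 | h0
    · rw [← h0, zero_div, Real.logb_zero, neg_zero, zero_div] at hxB
      linarith
    · have hpA : 0 < P.pr A := lt_of_lt_of_le h0 (P.p_le_pr hxA)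
      have hA1 : P.pr A ≤ 1 := P.pr_le_one A
      have hlogA : Real.logb (K : ℝ) (P.pr A) ≤ 0 := Real.logb_nonpos hK1 hpA.le hA1
      rw [ge_iff_le, le_div_iff₀ hnpos, Real.logb_div (ne_of_gt h0) (ne_of_gt hpA)] at hxB
      have hxG'' : Real.logb (K : ℝ) (1 / P.p x) ≤ (R + 1 / 2) * (n : ℝ) := by
        rw [div_le_iff₀ hnpos] at hxG'
        exact hxG'
      rw [one_div (P.p x), Real.logb_inv] at hxG''
      nlinarith
  have hstep : innerInf K X ε ν (R + 1) n ≤ P.pr S :=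
    (innerInf_le K X ε ν (R + 1) n hadm).trans (P.pr_mono hsub2)
  calc innerInf K X ε ν (R + 1) n ≤ P.pr S := hstep
    _ ≤ δ + r ^ n := hSle
    _ ≤ δ + κ := by linarith

end MainAux

/-- G_{ε,δ}(X) ≥ H̄_{ε+δ}(X). -/
theorem statement7 {𝒳 : Type*} [Countable 𝒳] (K : ℕ) (hK : 2 ≤ K) (X : Source 𝒳)
    (ε δ : ℝ) (hε0 : 0 ≤ ε) (hε1 : ε < 1) (hδ0 : 0 ≤ δ) (hδ1 : δ < 1) (hεδ : ε + δ < 1) :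
    Gfirst K X ε δ ≥ Hbar K X (ε + δ) := by
  classical
  rw [ge_iff_le]
  have hG : Gfirst K X ε δ
      = sInf {R | limNu (fun ν => limsup (fun n => innerInf K X ε ν R n) atTop) ≤ δ} := rfl
  have hH : Hbar K X (ε + δ) = sInf {R | limsup (fun n =>
      (X n).pr {x | Real.logb (K : ℝ) (1 / (X n).p x) / (n : ℝ) > R}) atTop ≤ ε + δ} := rfl
  rw [hG, hH]
  by_cases hGS : {R : ℝ | limNu (fun ν =>
      limsup (fun n => innerInf K X ε ν R n) atTop) ≤ δ}.Nonempty
  · refine le_csInf hGS fun R hR => ?_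
    have hbdd : BddBelow {R' : ℝ | limsup (fun n =>
        (X n).pr {x | Real.logb (K : ℝ) (1 / (X n).p x) / (n : ℝ) > R'}) atTop ≤ ε + δ} :=
      ⟨0, fun R' hR' => HS_nonneg K hK X hεδ hR'⟩
    refine le_of_forall_pos_le_add fun η hη => ?_
    exact csInf_le hbdd (HS_of_GS K hK X hε0 hε1 hδ0 hη hR)
  · rw [Set.not_nonempty_iff_eq_empty] at hGS
    rw [hGS, Real.sInf_empty]
    rcases Set.eq_empty_or_nonempty {R : ℝ | limsup (fun n =>
        (X n).pr {x | Real.logb (K : ℝ) (1 / (X n).p x) / (n : ℝ) > R}) atTop ≤ ε + δ}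
      with hHS | hHS
    · rw [hHS, Real.sInf_empty]
    · exfalso
      obtain ⟨R, hR⟩ := hHS
      have hR0 : 0 ≤ R := HS_nonneg K hK X hεδ hR
      have hmem : (R + 1) ∈ {R : ℝ | limNu (fun ν =>
          limsup (fun n => innerInf K X ε ν R n) atTop) ≤ δ} :=
        GS_of_HS K hK X hε0 hδ0 hR0 hR
      rw [hGS] at hmem
      exact hmem
end NY
end
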